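/- arXiv:2112.04670 — 2 statements merged into one kernel-verified Lean document; each statement's English description precedes it below -/
import Mathlib

section
/- Let X be a Banach space, Z a closed subspace, E* : X* → Z* the restriction map, and α an ordinal. If A ⊆ Z* is convex and satisfies that the weak* closure of A equals A^{(α+1)} and A^{(α+1)} ≠ A^{(α)}, then D := (E*)^{-1}(A) is a convex subset of X* whose weak* closure equals D^{(α+1)}, and D^{(α+1)} ≠ D^{(α)}. -/
open Set Filter Topology

noncomputable section

namespace Paper

/-- `y` is an up-neighbor of `x` within the subforest `S`: both belong to `S`, `x < y`,
and no vertex of `S` lies strictly between them. -/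
def UpNbrIn {P : Type*} [PartialOrder P] (S : Set P) (x y : P) : Prop :=
  x ∈ S ∧ y ∈ S ∧ x < y ∧ ∀ z ∈ S, ¬(x < z ∧ z < y)

/-- `x` is a terminal vertex of the subforest `S`: it has no up-neighbors within `S`. -/
def TerminalIn {P : Type*} [PartialOrder P] (S : Set P) (x : P) : Prop :=
  x ∈ S ∧ ∀ y, ¬UpNbrIn S x y

/-- One step of the derived forest operation: delete every terminal vertex whose
down-neighbor has infinitely many terminal up-neighbors. -/
def derStep {P : Type*} [PartialOrder P] (S : Set P) : Set P :=
  S \ {x | TerminalIn S x ∧ ∃ u, UpNbrIn S u x ∧ {y | UpNbrIn S u y ∧ TerminalIn S y}.Infinite}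

/-- Transfinite iteration of the derived forest operation: `derIter S β = S^{(β)}`,
with intersections at limit stages. -/
def derIter {P : Type*} [PartialOrder P] (S : Set P) (β : Ordinal) : Set P :=
  Ordinal.limitRecOn β S (fun _ T => derStep T)
    (fun β _ ih => ⋂ (γ : Ordinal), ⋂ (h : γ < β), ih γ h)

/-- Weak* closure of a set in the dual of a real normed space. -/
def wcl {Z : Type*} [NormedAddCommGroup Z] [NormedSpace ℝ Z]
    (A : Set (StrongDual ℝ Z)) : Set (StrongDual ℝ Z) :=
  StrongDual.toWeakDual ⁻¹' closure (StrongDual.toWeakDual '' A)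

/-- The weak* derived set `A^{(1)} = ⋃ₙ weak*-closure (A ∩ n B_{Z*})`. -/
def derSet {Z : Type*} [NormedAddCommGroup Z] [NormedSpace ℝ Z]
    (A : Set (StrongDual ℝ Z)) : Set (StrongDual ℝ Z) :=
  ⋃ n : ℕ, wcl (A ∩ {f | ‖f‖ ≤ (n : ℝ)})

/-- Transfinite weak* derived sets: `A^{(0)} = A`, `A^{(β+1)} = (A^{(β)})^{(1)}`, and
`A^{(β)} = ⋃_{γ<β} A^{(γ)}` at limit stages. -/
def derSetIter {Z : Type*} [NormedAddCommGroup Z] [NormedSpace ℝ Z]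
    (A : Set (StrongDual ℝ Z)) (α : Ordinal) : Set (StrongDual ℝ Z) :=
  Ordinal.limitRecOn α A (fun _ T => derSet T)
    (fun α _ ih => ⋃ (β : Ordinal), ⋃ (h : β < α), ih β h)

/-- The coefficient attached to a vertex `u` of the forest: the label of its down-neighbor,
or the label of `u` itself when `u` is an initial vertex (`n₀ = n₁`). -/
def coefN {P : Type*} [PartialOrder P] (e : P → ℕ) (u : P) : ℕ :=
  letI := Classical.dec (∃ w, w ⋖ u)
  if h : ∃ w, w ⋖ u then e h.choose else e u

/-- The vector `z*(v)` shortened to the subforest `S`: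
`∑_{u ≤ v, u ∈ S} n_{i-1} z*_{n_i}`. -/
def shortVec {P : Type*} [PartialOrder P] {Z : Type*} [NormedAddCommGroup Z] [NormedSpace ℝ Z]
    (e : P → ℕ) (zs : ℕ → StrongDual ℝ Z) (S : Set P) (v : P) : StrongDual ℝ Z :=
  ∑ᶠ u ∈ ({w | w ≤ v} ∩ S), (coefN e u : ℝ) • zs (e u)

/-- The shortening `X^β` of the set `X_α` to the subforest `S` (for `S = (F_α)^β`);
for `S = univ` this is `X_α` itself. -/
def XsetOf {P : Type*} [PartialOrder P] {Z : Type*} [NormedAddCommGroup Z] [NormedSpace ℝ Z]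
    (e : P → ℕ) (zs : ℕ → StrongDual ℝ Z) (S : Set P) : Set (StrongDual ℝ Z) :=
  {x | ∃ v : P, (¬∃ y, v ⋖ y) ∧ x = shortVec e zs S v}

/-- The largest index in the support of a vector of `X^β` (read off by evaluating
against the basic sequence); it is the label of the vertex `v(x)`. -/
def topIdx {Z : Type*} [NormedAddCommGroup Z] [NormedSpace ℝ Z]
    (z : ℕ → Z) (x : StrongDual ℝ Z) : ℕ :=
  sSup {n | x (z n) ≠ 0}

/-- The vector `y(x)`: `x` with the coordinate at its top vertex `v(x)` replaced by `0`. -/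
def truncTop {Z : Type*} [NormedAddCommGroup Z] [NormedSpace ℝ Z]
    (z : ℕ → Z) (zs : ℕ → StrongDual ℝ Z) (x : StrongDual ℝ Z) :
    StrongDual ℝ Z :=
  x - x (z (topIdx z x)) • zs (topIdx z x)

open NormedSpace StrongDual Metric

section Aux
variable {W : Type*} [NormedAddCommGroup W] [NormedSpace ℝ W]

lemma wcl_mono {A B : Set (StrongDual ℝ W)} (h : A ⊆ B) : wcl A ⊆ wcl B :=
  Set.preimage_mono (closure_mono (Set.image_mono h))

lemma subset_wcl (A : Set (StrongDual ℝ W)) : A ⊆ wcl A := fun _ ha =>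
  subset_closure (X := WeakDual ℝ W) (Set.mem_image_of_mem _ ha)

lemma image_wcl (A : Set (StrongDual ℝ W)) :
    toWeakDual '' wcl A = closure (toWeakDual '' A) :=
  Set.image_preimage_eq _ (toWeakDual (E := W)).surjective

lemma wcl_subset_wcl {S A : Set (StrongDual ℝ W)} (h : S ⊆ wcl A) : wcl S ⊆ wcl A := by
  intro x hx
  have h1 : toWeakDual '' S ⊆ closure (toWeakDual '' A) := by
    calc toWeakDual '' S ⊆ toWeakDual '' wcl A := Set.image_mono h
    _ = closure (toWeakDual '' A) := image_wcl A
  have h2 : closure (toWeakDual '' S) ⊆ closure (toWeakDual '' A) :=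
    closure_minimal h1 isClosed_closure
  exact h2 hx

lemma derSet_subset_wcl {S A : Set (StrongDual ℝ W)} (h : S ⊆ wcl A) : derSet S ⊆ wcl A := by
  intro x hx
  obtain ⟨n, hn⟩ := Set.mem_iUnion.1 hx
  exact wcl_subset_wcl (Set.inter_subset_left.trans h) hn

lemma derSetIter_zero (A : Set (StrongDual ℝ W)) : derSetIter A 0 = A :=
  Ordinal.limitRecOn_zero _ _ _

lemma derSetIter_succ (A : Set (StrongDual ℝ W)) (β : Ordinal) :
    derSetIter A (Order.succ β) = derSet (derSetIter A β) :=
  Ordinal.limitRecOn_succ _ _ _ _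

lemma derSetIter_limit (A : Set (StrongDual ℝ W)) {β : Ordinal} (h : Order.IsSuccLimit β) :
    derSetIter A β = ⋃ (γ : Ordinal), ⋃ (_ : γ < β), derSetIter A γ :=
  Ordinal.limitRecOn_limit _ _ _ _ h

lemma derSetIter_subset_wcl (A : Set (StrongDual ℝ W)) (β : Ordinal) :
    derSetIter A β ⊆ wcl A := by
  induction β using Ordinal.limitRecOn with
  | zero => rw [derSetIter_zero]; exact subset_wcl A
  | add_one γ ih => rw [← Order.succ_eq_add_one, derSetIter_succ]; exact derSet_subset_wcl ih
  | limit γ hγ ih =>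
      rw [derSetIter_limit A hγ]
      exact Set.iUnion_subset fun γ' => Set.iUnion_subset fun h => ih γ' h

end Aux

section Res
variable {X : Type*} [NormedAddCommGroup X] [NormedSpace ℝ X] (Z : Submodule ℝ X)

lemma res_surj (g : StrongDual ℝ ↥Z) :
    ∃ f : StrongDual ℝ X, f.comp Z.subtypeL = g ∧ ‖f‖ = ‖g‖ := by
  obtain ⟨f, hext, hnorm⟩ := exists_extension_norm_eq Z g
  exact ⟨f, by ext z; exact hext z, hnorm⟩

lemma norm_res_le (f : StrongDual ℝ X) : ‖f.comp Z.subtypeL‖ ≤ ‖f‖ := by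
  refine ContinuousLinearMap.opNorm_le_bound _ (norm_nonneg f) fun z => ?_
  simpa using f.le_opNorm (z : X)

lemma res_weak_continuous :
    Continuous (fun f : WeakDual ℝ X =>
      (toWeakDual ((WeakDual.toStrongDual f).comp Z.subtypeL) : WeakDual ℝ ↥Z)) := by
  apply WeakDual.continuous_of_continuous_eval
  intro z
  exact WeakDual.eval_continuous (z : X)

set_option maxHeartbeats 1000000 in
set_option synthInstance.maxHeartbeats 400000 in
lemma res_derSet_preimage (B : Set (StrongDual ℝ ↥Z)) :
    derSet ((fun f : StrongDual ℝ X => f.comp Z.subtypeL) ⁻¹' B)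
      = (fun f : StrongDual ℝ X => f.comp Z.subtypeL) ⁻¹' derSet B := by
  apply subset_antisymm
  · intro x hx
    obtain ⟨n, hn⟩ := Set.mem_iUnion.1 hx
    show x.comp Z.subtypeL ∈ derSet B
    refine Set.mem_iUnion.2 ⟨n, ?_⟩
    have hmaps : Set.MapsTo (fun f : WeakDual ℝ X =>
        (toWeakDual ((WeakDual.toStrongDual f).comp Z.subtypeL) : WeakDual ℝ ↥Z))
        (toWeakDual '' ((fun f : StrongDual ℝ X => f.comp Z.subtypeL) ⁻¹' B ∩ {f | ‖f‖ ≤ (n : ℝ)}))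
        (toWeakDual '' (B ∩ {g | ‖g‖ ≤ (n : ℝ)})) := by
      rintro _ ⟨f, ⟨hfB, hfn⟩, rfl⟩
      exact ⟨f.comp Z.subtypeL, ⟨hfB, (norm_res_le Z f).trans hfn⟩, rfl⟩
    have h4 := map_mem_closure (res_weak_continuous Z) hn hmaps
    exact h4
  · intro x hx
    obtain ⟨n, hn⟩ := Set.mem_iUnion.1 hx
    set T : Set (StrongDual ℝ X) := {f | ‖f‖ ≤ (n : ℝ) ∧ f.comp Z.subtypeL ∈ B} with hT
    set Tw : Set (WeakDual ℝ X) := toWeakDual '' T with hTw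
    have hK : IsCompact (WeakDual.toStrongDual ⁻¹' closedBall (0 : StrongDual ℝ X) n) :=
      WeakDual.isCompact_closedBall (𝕜 := ℝ) 0 n
    have hTwK : Tw ⊆ WeakDual.toStrongDual ⁻¹' closedBall (0 : StrongDual ℝ X) n := by
      rintro _ ⟨f, hf, rfl⟩
      simpa [mem_closedBall_zero_iff] using hf.1
    have hclTw : IsCompact (closure Tw) :=
      hK.of_isClosed_subset isClosed_closure (closure_minimal hTwK hK.isClosed)
    have himg : IsClosed ((fun f : WeakDual ℝ X =>
        (toWeakDual ((WeakDual.toStrongDual f).comp Z.subtypeL) : WeakDual ℝ ↥Z)) ''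
          closure Tw) :=
      (hclTw.image (res_weak_continuous Z)).isClosed
    have hsub : toWeakDual '' (B ∩ {g | ‖g‖ ≤ (n : ℝ)}) ⊆
        (fun f : WeakDual ℝ X =>
          (toWeakDual ((WeakDual.toStrongDual f).comp Z.subtypeL) : WeakDual ℝ ↥Z)) '' Tw := by
      rintro _ ⟨g, ⟨hgB, hgn⟩, rfl⟩
      obtain ⟨f, hfE, hfnorm⟩ := res_surj Z g
      exact ⟨toWeakDual f, ⟨f, ⟨by rw [hfnorm]; exact hgn, hfE ▸ hgB⟩, rfl⟩,
        congrArg toWeakDual hfE⟩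
    have hcl : closure (toWeakDual '' (B ∩ {g | ‖g‖ ≤ (n : ℝ)})) ⊆
        (fun f : WeakDual ℝ X =>
          (toWeakDual ((WeakDual.toStrongDual f).comp Z.subtypeL) : WeakDual ℝ ↥Z)) ''
            closure Tw :=
      closure_minimal (hsub.trans (Set.image_mono subset_closure)) himg
    obtain ⟨fw, hfwcl, hfweq⟩ := hcl hn
    set f : StrongDual ℝ X := WeakDual.toStrongDual fw with hf
    have hEf : f.comp Z.subtypeL = x.comp Z.subtypeL := hfweq
    set w : StrongDual ℝ X := x - f with hw
    have hEw0 : w.comp Z.subtypeL = 0 := by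
      rw [hw, ContinuousLinearMap.sub_comp, hEf, sub_self]
    obtain ⟨m, hm⟩ := exists_nat_ge ((n : ℝ) + ‖w‖)
    refine Set.mem_iUnion.2 ⟨m, ?_⟩
    have htr : Continuous (fun a : WeakDual ℝ X => a + toWeakDual w) :=
      continuous_id.add continuous_const
    have hx' : toWeakDual x ∈ closure ((fun a : WeakDual ℝ X => a + toWeakDual w) '' Tw) := by
      have h2 : toWeakDual x = fw + toWeakDual w := by
        have hx2 : x = f + w := by rw [hw]; abel
        rw [hx2, map_add]; rfl
      have h3 := map_mem_closure htr hfwcl (Set.mapsTo_image _ _)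
      rw [h2]; exact h3
    have himgsub : (fun a : WeakDual ℝ X => a + toWeakDual w) '' Tw ⊆
        toWeakDual '' ((fun f : StrongDual ℝ X => f.comp Z.subtypeL) ⁻¹' B
          ∩ {f | ‖f‖ ≤ (m : ℝ)}) := by
      rintro _ ⟨_, ⟨f', hf', rfl⟩, rfl⟩
      refine ⟨f' + w, ⟨?_, ?_⟩, rfl⟩
      · show (f' + w).comp Z.subtypeL ∈ B
        rw [ContinuousLinearMap.add_comp, hEw0, add_zero]
        exact hf'.2
      · exact (norm_add_le _ _).trans ((add_le_add_left hf'.1 _).trans hm)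
    exact closure_mono himgsub hx'

lemma res_derSetIter_preimage (B : Set (StrongDual ℝ ↥Z)) (β : Ordinal) :
    derSetIter ((fun f : StrongDual ℝ X => f.comp Z.subtypeL) ⁻¹' B) β
      = (fun f : StrongDual ℝ X => f.comp Z.subtypeL) ⁻¹' derSetIter B β := by
  induction β using Ordinal.limitRecOn with
  | zero => rw [derSetIter_zero, derSetIter_zero]
  | add_one γ ih => rw [← Order.succ_eq_add_one, derSetIter_succ, derSetIter_succ, ih, res_derSet_preimage]
  | limit γ hγ ih =>
      rw [derSetIter_limit _ hγ, derSetIter_limit _ hγ]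
      simp only [Set.preimage_iUnion]
      exact Set.iUnion_congr fun γ' => Set.iUnion_congr fun h => ih γ' h

lemma res_wcl_preimage_subset (A : Set (StrongDual ℝ ↥Z)) :
    wcl ((fun f : StrongDual ℝ X => f.comp Z.subtypeL) ⁻¹' A)
      ⊆ (fun f : StrongDual ℝ X => f.comp Z.subtypeL) ⁻¹' wcl A := by
  intro x hx
  have hmaps : Set.MapsTo (fun f : WeakDual ℝ X =>
      (toWeakDual ((WeakDual.toStrongDual f).comp Z.subtypeL) : WeakDual ℝ ↥Z))
      (toWeakDual '' ((fun f : StrongDual ℝ X => f.comp Z.subtypeL) ⁻¹' A))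
      (toWeakDual '' A) := by
    rintro _ ⟨f, hf, rfl⟩
    exact Set.mem_image_of_mem _ hf
  have h4 := map_mem_closure (res_weak_continuous Z) hx hmaps
  exact h4

end Res

theorem statement3 {X : Type*} [NormedAddCommGroup X] [NormedSpace ℝ X] [CompleteSpace X]
    (Z : Submodule ℝ X) (hZ : IsClosed (Z : Set X))
    (A : Set (StrongDual ℝ ↥Z)) (α : Ordinal)
    (hA : Convex ℝ A)
    (h1 : wcl A = derSetIter A (α + 1))
    (h2 : derSetIter A (α + 1) ≠ derSetIter A α) :
    Convex ℝ ((fun f : StrongDual ℝ X => f.comp Z.subtypeL) ⁻¹' A) ∧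
    wcl ((fun f : StrongDual ℝ X => f.comp Z.subtypeL) ⁻¹' A)
      = derSetIter ((fun f : StrongDual ℝ X => f.comp Z.subtypeL) ⁻¹' A) (α + 1) ∧
    derSetIter ((fun f : StrongDual ℝ X => f.comp Z.subtypeL) ⁻¹' A) (α + 1)
      ≠ derSetIter ((fun f : StrongDual ℝ X => f.comp Z.subtypeL) ⁻¹' A) α := by
  have hsurj : Function.Surjective (fun f : StrongDual ℝ X => f.comp Z.subtypeL) := by
    intro g
    obtain ⟨f, hf, -⟩ := res_surj Z g
    exact ⟨f, hf⟩
  have hiter := res_derSetIter_preimage Z A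
  refine ⟨?_, ?_, ?_⟩
  · exact hA.linear_preimage
      { toFun := fun f : StrongDual ℝ X => f.comp Z.subtypeL
        map_add' := fun f g => ContinuousLinearMap.add_comp _ _ _
        map_smul' := fun c f => ContinuousLinearMap.smul_comp _ _ _ }
  · apply subset_antisymm
    · intro x hx
      have := res_wcl_preimage_subset Z A hx
      rw [Set.mem_preimage] at this
      rw [h1] at this
      rw [hiter (α + 1)]
      exact this
    · exact derSetIter_subset_wcl _ _
  · intro heq
    apply h2
    refine Function.Surjective.preimage_injective hsurj ?_
    rw [← hiter, ← hiter]
    exact heq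

end Paper
end
end

section
/- Let α be a countable limit ordinal and (β_n)_{n=1}^∞ the strictly increasing sequence of successor ordinals converging to α used to define F_α. Then for every ordinal β < α, the derived forest (F_α)^β equals the disjoint union of one copy of F_0 for each n with β ≥ β_n together with the derived forests (F_{β_n})^β for each n with β < β_n; moreover (F_α)^α is the disjoint union of countably many copies of F_0 (i.e., countably many isolated vertices). -/
open Set Filter Topology

noncomputable section

namespace Paper

set_option linter.unusedSectionVars false
set_option linter.unusedVariables false

section Aux

variable {P Q : Type*} [PartialOrder P] [PartialOrder Q]

/-- Isolated points (bottom-trigger relevant set). -/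
def IsoIn (S : Set P) : Set P := {x | TerminalIn S x ∧ ∀ z ∈ S, ¬ z < x}

lemma IsoIn_subset (S : Set P) : IsoIn S ⊆ S := fun _ h => h.1.1

lemma derStep_subset (S : Set P) : derStep S ⊆ S := diff_subset

lemma derIter_zero (S : Set P) : derIter S 0 = S := Ordinal.limitRecOn_zero _ _ _

lemma derIter_succ (S : Set P) (β : Ordinal) :
    derIter S (β + 1) = derStep (derIter S β) := by
  rw [derIter, Ordinal.add_one_eq_succ, Ordinal.limitRecOn_succ]; rfl

lemma derIter_limit (S : Set P) {β : Ordinal} (h : Order.IsSuccLimit β) :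
    derIter S β = ⋂ (γ : Ordinal), ⋂ (_ : γ < β), derIter S γ := by
  rw [derIter, Ordinal.limitRecOn_limit _ _ _ _ h]; rfl

lemma derIter_antitone (S : Set P) : Antitone (derIter S) := by
  intro γ δ h
  induction δ using Ordinal.induction with
  | _ δ ih =>
    rcases eq_or_lt_of_le h with rfl | hlt
    · exact le_rfl
    rcases Ordinal.zero_or_succ_or_isSuccLimit δ with rfl | ⟨δ', rfl⟩ | hl
    · exact absurd hlt (not_lt_zero (a := γ))
    · rw [← Ordinal.add_one_eq_succ, derIter_succ]
      exact (derStep_subset _).trans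
        (ih δ' (Order.lt_succ δ') (Order.lt_succ_iff.mp hlt))
    · rw [derIter_limit S hl]
      exact iInter₂_subset γ hlt

lemma derStep_singleton (r : P) : derStep ({r} : Set P) = {r} := by
  refine subset_antisymm (derStep_subset _) ?_
  intro x hx
  have hx' : x = r := hx
  subst hx'
  refine ⟨rfl, ?_⟩
  rintro ⟨-, u, hu, -⟩
  have : u = x := hu.1
  subst this
  exact absurd hu.2.2.1 (lt_irrefl u)

lemma derIter_of_singleton {S : Set P} {β₀ : Ordinal} {r : P}
    (h0 : derIter S β₀ = {r}) : ∀ β, β₀ ≤ β → derIter S β = {r} := by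
  intro β
  induction β using Ordinal.induction with
  | _ β ih =>
    intro hle
    rcases eq_or_lt_of_le hle with rfl | hlt
    · exact h0
    rcases Ordinal.zero_or_succ_or_isSuccLimit β with rfl | ⟨δ, rfl⟩ | hl
    · exact absurd hlt (not_lt_zero (a := β₀))
    · rw [← Ordinal.add_one_eq_succ, derIter_succ,
        ih δ (Order.lt_succ δ) (Order.lt_succ_iff.mp hlt), derStep_singleton]
    · rw [derIter_limit S hl]
      apply subset_antisymm
      · exact (iInter₂_subset β₀ hlt).trans h0.subset
      · intro x hx
        have hx' : x = r := hx
        subst hx'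
        refine mem_iInter₂.mpr fun γ hγ => ?_
        rcases le_total β₀ γ with hc | hc
        · exact (ih γ hγ hc).symm.subset rfl
        · exact derIter_antitone S hc (h0.symm.subset rfl)

/-! ### Transport along order isomorphisms -/

lemma mem_image_oi (e : P ≃o Q) {S : Set P} {x : Q} : x ∈ e '' S ↔ e.symm x ∈ S := by
  constructor
  · rintro ⟨a, ha, rfl⟩; simpa using ha
  · intro h; exact ⟨e.symm x, h, by simp⟩

lemma upNbrIn_image (e : P ≃o Q) {S : Set P} {x y : Q} :
    UpNbrIn (e '' S) x y ↔ UpNbrIn S (e.symm x) (e.symm y) := by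
  unfold UpNbrIn
  rw [mem_image_oi e, mem_image_oi e, e.symm.lt_iff_lt]
  refine and_congr_right fun _ => and_congr_right fun _ => and_congr_right fun _ => ?_
  constructor
  · rintro h4 z hz ⟨ha, hb⟩
    exact h4 (e z) (⟨z, hz, rfl⟩) ⟨by simpa using e.strictMono ha, by simpa using e.strictMono hb⟩
  · rintro h4 z ⟨w, hw, rfl⟩ ⟨ha, hb⟩
    refine h4 w hw ⟨?_, ?_⟩
    · have := e.symm.strictMono ha; simpa using this
    · have := e.symm.strictMono hb; simpa using this

lemma terminalIn_image (e : P ≃o Q) {S : Set P} {x : Q} :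
    TerminalIn (e '' S) x ↔ TerminalIn S (e.symm x) := by
  unfold TerminalIn
  rw [mem_image_oi e]
  refine and_congr_right fun _ => ?_
  constructor
  · intro h2 y hy
    refine h2 (e y) ?_
    rw [upNbrIn_image e, e.symm_apply_apply]
    exact hy
  · intro h2 y hy
    exact h2 (e.symm y) ((upNbrIn_image e).mp hy)

lemma isoIn_image (e : P ≃o Q) (S : Set P) :
    IsoIn (e '' S) = e '' IsoIn S := by
  ext x
  rw [mem_image_oi e]
  unfold IsoIn
  simp only [mem_setOf_eq, terminalIn_image e]
  refine and_congr_right fun _ => ?_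
  constructor
  · intro h2 z hz hlt
    exact h2 (e z) (⟨z, hz, rfl⟩) (by simpa using e.strictMono hlt)
  · rintro h2 z ⟨w, hw, rfl⟩ hlt
    exact h2 w hw (by simpa using e.symm.strictMono hlt)

lemma trigSet_image (e : P ≃o Q) (S : Set P) (u : P) :
    {y | UpNbrIn (e '' S) (e u) y ∧ TerminalIn (e '' S) y}
      = e '' {y | UpNbrIn S u y ∧ TerminalIn S y} := by
  ext y
  rw [mem_image_oi e]
  simp only [mem_setOf_eq, upNbrIn_image e, terminalIn_image e, e.symm_apply_apply]

lemma delCond_image (e : P ≃o Q) {S : Set P} {x : Q} :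
    (TerminalIn (e '' S) x ∧ ∃ u, UpNbrIn (e '' S) u x ∧
        {y | UpNbrIn (e '' S) u y ∧ TerminalIn (e '' S) y}.Infinite)
      ↔ (TerminalIn S (e.symm x) ∧ ∃ u, UpNbrIn S u (e.symm x) ∧
        {y | UpNbrIn S u y ∧ TerminalIn S y}.Infinite) := by
  constructor
  · rintro ⟨ht, u, hu, hinf⟩
    refine ⟨(terminalIn_image e).mp ht, e.symm u, (upNbrIn_image e).mp hu, ?_⟩
    have heq : {y | UpNbrIn (e '' S) u y ∧ TerminalIn (e '' S) y}
        = e '' {y | UpNbrIn S (e.symm u) y ∧ TerminalIn S y} := by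
      rw [← trigSet_image e S (e.symm u), e.apply_symm_apply]
    rw [heq] at hinf
    exact hinf.of_image
  · rintro ⟨ht, u, hu, hinf⟩
    refine ⟨(terminalIn_image e).mpr ht, e u, ?_, ?_⟩
    · rw [upNbrIn_image e, e.symm_apply_apply]; exact hu
    · rw [trigSet_image e S u]
      exact hinf.image (e.injective.injOn)

lemma derStep_image (e : P ≃o Q) (S : Set P) :
    derStep (e '' S) = e '' derStep S := by
  ext x
  simp only [derStep, mem_diff, mem_setOf_eq, mem_image_oi e]
  exact and_congr Iff.rfl (not_congr (delCond_image e))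

lemma derIter_image (e : P ≃o Q) (S : Set P) (β : Ordinal) :
    derIter (e '' S) β = e '' derIter S β := by
  induction β using Ordinal.induction with
  | _ β ih =>
    rcases Ordinal.zero_or_succ_or_isSuccLimit β with rfl | ⟨δ, rfl⟩ | hl
    · rw [derIter_zero, derIter_zero]
    · rw [← Ordinal.add_one_eq_succ, derIter_succ, derIter_succ,
        ih δ (Order.lt_succ δ), derStep_image]
    · rw [derIter_limit _ hl, derIter_limit _ hl]
      rw [image_iInter e.bijective]
      refine iInter_congr fun γ => ?_
      rw [image_iInter e.bijective]
      exact iInter_congr fun hγ => ih γ hγ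

lemma derIter_univ_image (e : P ≃o Q) (β : Ordinal) :
    derIter (univ : Set Q) β = e '' derIter (univ : Set P) β := by
  rw [← derIter_image e, image_univ, e.surjective.range_eq]


/-! ### Sigma (disjoint union) lemmas -/

section Sig
variable {Pn : ℕ → Type*} [∀ n, PartialOrder (Pn n)]

def sigSet (S : ∀ n, Set (Pn n)) : Set (Σ n, Pn n) := {x | x.2 ∈ S x.1}

lemma mem_sigSet {S : ∀ n, Set (Pn n)} {n : ℕ} {a : Pn n} :
    (⟨n, a⟩ : Σ n, Pn n) ∈ sigSet S ↔ a ∈ S n := Iff.rfl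

lemma sig_fst_eq_of_le {x y : Σ n, Pn n} (h : x ≤ y) : x.1 = y.1 := by
  obtain ⟨n, a⟩ := x; obtain ⟨m, b⟩ := y
  obtain ⟨h, -⟩ := Sigma.le_def.mp h
  exact h

lemma sig_mk_lt_mk {n : ℕ} {a b : Pn n} : (⟨n, a⟩ : Σ n, Pn n) < ⟨n, b⟩ ↔ a < b := by
  rw [lt_iff_le_not_ge, lt_iff_le_not_ge, Sigma.mk_le_mk_iff, Sigma.mk_le_mk_iff]

lemma upNbrIn_sig {S : ∀ n, Set (Pn n)} {n : ℕ} {a b : Pn n} :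
    UpNbrIn (sigSet S) ⟨n, a⟩ ⟨n, b⟩ ↔ UpNbrIn (S n) a b := by
  constructor
  · rintro ⟨h1, h2, h3, h4⟩
    refine ⟨h1, h2, sig_mk_lt_mk.mp h3, fun z hz hc => ?_⟩
    exact h4 ⟨n, z⟩ hz ⟨sig_mk_lt_mk.mpr hc.1, sig_mk_lt_mk.mpr hc.2⟩
  · rintro ⟨h1, h2, h3, h4⟩
    refine ⟨h1, h2, sig_mk_lt_mk.mpr h3, ?_⟩
    rintro ⟨m, z⟩ hz ⟨ha, hb⟩
    have hnm : n = m := sig_fst_eq_of_le (le_of_lt ha)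
    subst hnm
    exact h4 z hz ⟨sig_mk_lt_mk.mp ha, sig_mk_lt_mk.mp hb⟩

lemma terminalIn_sig {S : ∀ n, Set (Pn n)} {n : ℕ} {a : Pn n} :
    TerminalIn (sigSet S) ⟨n, a⟩ ↔ TerminalIn (S n) a := by
  constructor
  · rintro ⟨h1, h2⟩
    exact ⟨h1, fun b hb => h2 ⟨n, b⟩ (upNbrIn_sig.mpr hb)⟩
  · rintro ⟨h1, h2⟩
    refine ⟨h1, ?_⟩
    rintro ⟨m, b⟩ hb
    have hnm : n = m := sig_fst_eq_of_le (le_of_lt hb.2.2.1)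
    subst hnm
    exact h2 b (upNbrIn_sig.mp hb)

lemma trigSet_sig {S : ∀ n, Set (Pn n)} {n : ℕ} {u : Pn n} :
    {y | UpNbrIn (sigSet S) ⟨n, u⟩ y ∧ TerminalIn (sigSet S) y}
      = Sigma.mk n '' {b | UpNbrIn (S n) u b ∧ TerminalIn (S n) b} := by
  ext ⟨m, b⟩
  constructor
  · rintro ⟨h1, h2⟩
    have hnm : n = m := sig_fst_eq_of_le (le_of_lt h1.2.2.1)
    subst hnm
    exact ⟨b, ⟨upNbrIn_sig.mp h1, terminalIn_sig.mp h2⟩, rfl⟩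
  · rintro ⟨c, ⟨hc1, hc2⟩, heq⟩
    cases heq
    exact ⟨upNbrIn_sig.mpr hc1, terminalIn_sig.mpr hc2⟩

lemma derStep_sig (S : ∀ n, Set (Pn n)) :
    derStep (sigSet S) = sigSet (fun n => derStep (S n)) := by
  ext ⟨n, a⟩
  constructor
  · rintro ⟨hmem, hdel⟩
    refine ⟨hmem, ?_⟩
    rintro ⟨ht, u, hu, hinf⟩
    refine hdel ⟨terminalIn_sig.mpr ht, ⟨n, u⟩, upNbrIn_sig.mpr hu, ?_⟩
    rw [trigSet_sig]
    exact hinf.image sigma_mk_injective.injOn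
  · rintro ⟨hmem, hdel⟩
    refine ⟨hmem, ?_⟩
    rintro ⟨ht, ⟨m, u⟩, hu, hinf⟩
    have hnm : m = n := sig_fst_eq_of_le (le_of_lt hu.2.2.1)
    subst hnm
    refine hdel ⟨terminalIn_sig.mp ht, u, upNbrIn_sig.mp hu, ?_⟩
    rw [trigSet_sig] at hinf
    exact hinf.of_image

lemma isoIn_sig (S : ∀ n, Set (Pn n)) :
    IsoIn (sigSet S) = sigSet (fun n => IsoIn (S n)) := by
  ext ⟨n, a⟩
  constructor
  · rintro ⟨ht, hmin⟩
    exact ⟨terminalIn_sig.mp ht, fun z hz hlt => hmin ⟨n, z⟩ hz (sig_mk_lt_mk.mpr hlt)⟩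
  · rintro ⟨ht, hmin⟩
    refine ⟨terminalIn_sig.mpr ht, ?_⟩
    rintro ⟨m, z⟩ hz hlt
    have hnm : m = n := sig_fst_eq_of_le (le_of_lt hlt)
    subst hnm
    exact hmin z hz (sig_mk_lt_mk.mp hlt)

lemma derIter_sig (S : ∀ n, Set (Pn n)) (β : Ordinal) :
    derIter (sigSet S) β = sigSet (fun n => derIter (S n) β) := by
  induction β using Ordinal.induction with
  | _ β ih =>
    rcases Ordinal.zero_or_succ_or_isSuccLimit β with rfl | ⟨δ, rfl⟩ | hl
    · rw [derIter_zero]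
      ext ⟨n, a⟩
      rw [mem_sigSet, mem_sigSet, derIter_zero]
    · rw [← Ordinal.add_one_eq_succ, derIter_succ, ih δ (Order.lt_succ δ), derStep_sig]
      ext ⟨n, a⟩
      rw [mem_sigSet, mem_sigSet, derIter_succ]
    · rw [derIter_limit _ hl]
      ext ⟨n, a⟩
      rw [mem_sigSet]
      simp only [mem_iInter]
      constructor
      · intro h
        show a ∈ derIter (S n) β
        rw [derIter_limit _ hl]
        simp only [mem_iInter]
        intro γ hγ
        have h2 := h γ hγ
        rw [ih γ hγ] at h2
        exact h2
      · intro h γ hγ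
        rw [ih γ hγ, mem_sigSet]
        have h2 : a ∈ derIter (S n) β := h
        rw [derIter_limit _ hl] at h2
        simp only [mem_iInter] at h2
        exact h2 γ hγ

lemma sigSet_univ : sigSet (fun n => (univ : Set (Pn n))) = univ := by
  ext ⟨n, a⟩; simp [mem_sigSet]

lemma sigSet_finite {S : ∀ n, Set (Pn n)} (hfin : ∀ n, (S n).Finite) {N : ℕ}
    (hempty : ∀ n, N ≤ n → S n = ∅) : (sigSet S).Finite := by
  refine Set.Finite.subset
    (Set.Finite.biUnion (Set.finite_Iio N) (fun n _ => (hfin n).image (Sigma.mk n))) ?_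
  rintro ⟨n, a⟩ ha
  have ha' : a ∈ S n := ha
  by_cases h : n < N
  · exact mem_biUnion h ⟨a, ha', rfl⟩
  · rw [hempty n (le_of_not_gt h)] at ha'
    exact absurd ha' (notMem_empty a)

end Sig

/-! ### WithBot lemmas -/

section Bot
variable {P : Type*} [PartialOrder P]

def botSet (T : Set P) : Set (WithBot P) := insert ⊥ ((↑) '' T)

lemma bot_mem_botSet (T : Set P) : (⊥ : WithBot P) ∈ botSet T := mem_insert _ _

lemma coe_mem_botSet {T : Set P} {a : P} : (↑a : WithBot P) ∈ botSet T ↔ a ∈ T := by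
  simp [botSet]

lemma botSet_univ : botSet (univ : Set P) = univ := by
  ext x
  induction x using WithBot.recBotCoe with
  | bot => simp [botSet]
  | coe a => simp [coe_mem_botSet]

lemma not_upNbrIn_to_bot {S : Set (WithBot P)} {x : WithBot P} : ¬ UpNbrIn S x ⊥ := by
  rintro ⟨-, -, h, -⟩
  exact not_lt_bot h

lemma upNbrIn_bot_coe {T : Set P} {a b : P} :
    UpNbrIn (botSet T) ↑a ↑b ↔ UpNbrIn T a b := by
  constructor
  · rintro ⟨h1, h2, h3, h4⟩
    refine ⟨coe_mem_botSet.mp h1, coe_mem_botSet.mp h2, WithBot.coe_lt_coe.mp h3,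
      fun z hz hc => ?_⟩
    exact h4 ↑z (coe_mem_botSet.mpr hz)
      ⟨WithBot.coe_lt_coe.mpr hc.1, WithBot.coe_lt_coe.mpr hc.2⟩
  · rintro ⟨h1, h2, h3, h4⟩
    refine ⟨coe_mem_botSet.mpr h1, coe_mem_botSet.mpr h2, WithBot.coe_lt_coe.mpr h3, ?_⟩
    intro z hz hc
    induction z using WithBot.recBotCoe with
    | bot => exact not_lt_bot hc.1
    | coe z' =>
        exact h4 z' (coe_mem_botSet.mp hz)
          ⟨WithBot.coe_lt_coe.mp hc.1, WithBot.coe_lt_coe.mp hc.2⟩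

lemma terminalIn_bot_coe {T : Set P} {a : P} :
    TerminalIn (botSet T) ↑a ↔ TerminalIn T a := by
  constructor
  · rintro ⟨h1, h2⟩
    exact ⟨coe_mem_botSet.mp h1, fun b hb => h2 ↑b (upNbrIn_bot_coe.mpr hb)⟩
  · rintro ⟨h1, h2⟩
    refine ⟨coe_mem_botSet.mpr h1, ?_⟩
    intro y hy
    induction y using WithBot.recBotCoe with
    | bot => exact not_upNbrIn_to_bot hy
    | coe b => exact h2 b (upNbrIn_bot_coe.mp hy)

lemma upNbrIn_bot_bot {T : Set P} {b : P} :
    UpNbrIn (botSet T) ⊥ ↑b ↔ b ∈ T ∧ ∀ z ∈ T, ¬ z < b := by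
  constructor
  · rintro ⟨h1, h2, h3, h4⟩
    refine ⟨coe_mem_botSet.mp h2, fun z hz hlt => ?_⟩
    exact h4 ↑z (coe_mem_botSet.mpr hz) ⟨WithBot.bot_lt_coe z, WithBot.coe_lt_coe.mpr hlt⟩
  · rintro ⟨h1, h2⟩
    refine ⟨bot_mem_botSet T, coe_mem_botSet.mpr h1, WithBot.bot_lt_coe b, ?_⟩
    intro z hz hc
    induction z using WithBot.recBotCoe with
    | bot => exact lt_irrefl ⊥ hc.1
    | coe z' => exact h2 z' (coe_mem_botSet.mp hz) (WithBot.coe_lt_coe.mp hc.2)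

lemma bot_trigSet (T : Set P) :
    {y | UpNbrIn (botSet T) ⊥ y ∧ TerminalIn (botSet T) y} = (↑) '' (IsoIn T) := by
  ext y
  induction y using WithBot.recBotCoe with
  | bot =>
      simp only [mem_setOf_eq, mem_image]
      constructor
      · rintro ⟨h1, -⟩
        exact absurd h1.2.2.1 (lt_irrefl ⊥)
      · rintro ⟨b, -, hb⟩
        exact absurd hb (by simp)
  | coe b =>
      simp only [mem_setOf_eq]
      constructor
      · rintro ⟨h1, h2⟩
        obtain ⟨hbT, hmin⟩ := upNbrIn_bot_bot.mp h1
        exact ⟨b, ⟨terminalIn_bot_coe.mp h2, hmin⟩, rfl⟩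
      · rintro ⟨c, ⟨hc1, hc2⟩, heq⟩
        have : c = b := by exact_mod_cast heq
        subst this
        exact ⟨upNbrIn_bot_bot.mpr ⟨hc1.1, hc2⟩, terminalIn_bot_coe.mpr hc1⟩

lemma coe_trigSet {T : Set P} (u : P) :
    {y | UpNbrIn (botSet T) ↑u y ∧ TerminalIn (botSet T) y}
      = (↑) '' {b | UpNbrIn T u b ∧ TerminalIn T b} := by
  ext y
  induction y using WithBot.recBotCoe with
  | bot =>
      simp only [mem_setOf_eq, mem_image]
      constructor
      · rintro ⟨h1, -⟩
        exact absurd h1.2.2.1 not_lt_bot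
      · rintro ⟨b, -, hb⟩
        exact absurd hb (by simp)
  | coe b =>
      simp only [mem_setOf_eq]
      constructor
      · rintro ⟨h1, h2⟩
        exact ⟨b, ⟨upNbrIn_bot_coe.mp h1, terminalIn_bot_coe.mp h2⟩, rfl⟩
      · rintro ⟨c, ⟨hc1, hc2⟩, heq⟩
        have : c = b := by exact_mod_cast heq
        subst this
        exact ⟨upNbrIn_bot_coe.mpr hc1, terminalIn_bot_coe.mpr hc2⟩

lemma bot_mem_derStep {S : Set (WithBot P)} (h : ⊥ ∈ S) : (⊥ : WithBot P) ∈ derStep S := by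
  refine ⟨h, ?_⟩
  rintro ⟨-, u, hu, -⟩
  exact not_upNbrIn_to_bot hu

lemma derStep_bot {T : Set P} (hfin : (IsoIn T).Finite) :
    derStep (botSet T) = botSet (derStep T) := by
  ext x
  induction x using WithBot.recBotCoe with
  | bot => exact iff_of_true (bot_mem_derStep (bot_mem_botSet T)) (bot_mem_botSet _)
  | coe a =>
      constructor
      · rintro ⟨hmem, hdel⟩
        rw [coe_mem_botSet]
        refine ⟨coe_mem_botSet.mp hmem, ?_⟩
        rintro ⟨ht, u, hu, hinf⟩
        refine hdel ⟨terminalIn_bot_coe.mpr ht, ↑u, upNbrIn_bot_coe.mpr hu, ?_⟩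
        rw [coe_trigSet]
        exact hinf.image (WithBot.coe_injective.injOn)
      · intro hmem
        have hmem' : a ∈ derStep T := coe_mem_botSet.mp hmem
        refine ⟨coe_mem_botSet.mpr hmem'.1, ?_⟩
        rintro ⟨ht, u, hu, hinf⟩
        induction u using WithBot.recBotCoe with
        | bot =>
            rw [bot_trigSet] at hinf
            exact hinf (hfin.image _)
        | coe u' =>
            rw [coe_trigSet] at hinf
            exact hmem'.2 ⟨terminalIn_bot_coe.mp ht, u', upNbrIn_bot_coe.mp hu, hinf.of_image⟩

lemma derStep_bot_collapse {T : Set P} (hanti : ∀ a ∈ T, ∀ b ∈ T, ¬ a < b)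
    (hinf : T.Infinite) : derStep (botSet T) = {⊥} := by
  have hIso : IsoIn T = T := by
    refine subset_antisymm (IsoIn_subset T) fun a ha => ?_
    exact ⟨⟨ha, fun b hb => hanti a ha b hb.2.1 hb.2.2.1⟩,
      fun z hz hlt => hanti z hz a ha hlt⟩
  apply subset_antisymm
  · intro x hx
    induction x using WithBot.recBotCoe with
    | bot => rfl
    | coe a =>
        exfalso
        obtain ⟨hmem, hdel⟩ := hx
        have haT : a ∈ T := coe_mem_botSet.mp hmem
        refine hdel ⟨?_, ⊥, ?_, ?_⟩
        · exact terminalIn_bot_coe.mpr ⟨haT, fun b hb => hanti a haT b hb.2.1 hb.2.2.1⟩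
        · exact upNbrIn_bot_bot.mpr ⟨haT, fun z hz hlt => hanti z hz a haT hlt⟩
        · rw [bot_trigSet, hIso]
          exact hinf.image (WithBot.coe_injective.injOn)
  · intro x hx
    have : x = ⊥ := hx
    subst this
    exact bot_mem_derStep (bot_mem_botSet T)

lemma derIter_bot {T : Set P} {β : Ordinal}
    (hfin : ∀ γ < β, (IsoIn (derIter T γ)).Finite) :
    derIter (botSet T) β = botSet (derIter T β) := by
  induction β using Ordinal.induction with
  | _ β ih =>
    rcases Ordinal.zero_or_succ_or_isSuccLimit β with rfl | ⟨δ, rfl⟩ | hl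
    · rw [derIter_zero, derIter_zero]
    · have hδ : δ < δ + 1 := by rw [Ordinal.add_one_eq_succ]; exact Order.lt_succ δ
      rw [← Ordinal.add_one_eq_succ] at *
      rw [derIter_succ, ih δ hδ (fun γ hγ => hfin γ (hγ.trans hδ)),
        derStep_bot (hfin δ hδ), derIter_succ]
    · rw [derIter_limit _ hl]
      ext x
      induction x using WithBot.recBotCoe with
      | bot =>
          simp only [mem_iInter]
          exact iff_of_true (fun γ hγ => (ih γ hγ (fun δ hδ => hfin δ (hδ.trans hγ))) ▸
            bot_mem_botSet _) (bot_mem_botSet _)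
      | coe a =>
          simp only [mem_iInter]
          constructor
          · intro h
            rw [coe_mem_botSet, derIter_limit _ hl]
            simp only [mem_iInter]
            intro γ hγ
            have h2 := h γ hγ
            rw [ih γ hγ (fun δ hδ => hfin δ (hδ.trans hγ)), coe_mem_botSet] at h2
            exact h2
          · intro h γ hγ
            rw [ih γ hγ (fun δ hδ => hfin δ (hδ.trans hγ)), coe_mem_botSet]
            have h2 := coe_mem_botSet.mp h
            rw [derIter_limit _ hl] at h2
            simp only [mem_iInter] at h2
            exact h2 γ hγ

end Bot

/-! ### No isolated points in a rooted forest with finite chains -/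

lemma isoIn_eq_empty {P : Type*} [PartialOrder P] {S : Set P} {b : P}
    (hb : b ∈ S) (hble : ∀ x ∈ S, b ≤ x) (hex : ∃ c ∈ S, c ≠ b)
    (hfin : ∀ x : P, {y : P | y ≤ x}.Finite) :
    IsoIn S = ∅ := by
  ext x
  simp only [mem_empty_iff_false, iff_false]
  rintro ⟨⟨hxS, hterm⟩, hmin⟩
  by_cases hxb : x = b
  · subst hxb
    obtain ⟨c, hc, hcb⟩ := hex
    have hbc : x < c := lt_of_le_of_ne (hble c hc) (Ne.symm hcb)
    set A : Set P := {z ∈ S | x < z ∧ z ≤ c} with hA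
    have hAfin : A.Finite := (hfin c).subset (fun z hz => hz.2.2)
    have hAne : A.Nonempty := ⟨c, hc, hbc, le_rfl⟩
    obtain ⟨m, hmM⟩ := hAfin.exists_minimal hAne
    have hm : m ∈ A := hmM.prop
    have hmmin : ∀ z ∈ A, z ≤ m → m = z := fun z hz h => hmM.eq_of_ge hz h
    refine hterm m ⟨hxS, hm.1, hm.2.1, ?_⟩
    intro z hz ⟨h1, h2⟩
    have hzA : z ∈ A := ⟨hz, h1, (le_of_lt h2).trans hm.2.2⟩
    have hmz : m = z := hmmin z hzA (le_of_lt h2)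
    exact absurd (hmz ▸ h2) (lt_irrefl z)
  · exact hmin b hb (lt_of_le_of_ne (hble x hxS) (Ne.symm hxb))


theorem succStep {P Q : Type*} [PartialOrder P] [PartialOrder Q]
    {δ : Ordinal} (e : P ≃o WithBot Q)
    (hchfin : ∀ x : P, {y : P | y ≤ x}.Finite)
    (hIsoFin : ∀ β < δ, (IsoIn (derIter (univ : Set Q) β)).Finite)
    (hinf : (derIter (univ : Set Q) δ).Infinite)
    (hanti : ∀ x ∈ derIter (univ : Set Q) δ, ∀ y ∈ derIter (univ : Set Q) δ, ¬ x < y) :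
    (∀ β < δ + 1, IsoIn (derIter (univ : Set P) β) = ∅) ∧
    (∃ r : P, derIter (univ : Set P) (δ + 1) = {r}) := by
  have key : ∀ β ≤ δ, derIter (univ : Set P) β
      = e.symm '' botSet (derIter (univ : Set Q) β) := by
    intro β hβ
    rw [derIter_univ_image e.symm, ← botSet_univ,
      derIter_bot (fun γ hγ => hIsoFin γ (lt_of_lt_of_le hγ hβ))]
  constructor
  · intro β hβ
    have hβδ : β ≤ δ := by rwa [Ordinal.add_one_eq_succ, Order.lt_succ_iff] at hβ
    rw [key β hβδ]
    obtain ⟨q0, hq0⟩ := hinf.nonempty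
    have hq0β : q0 ∈ derIter (univ : Set Q) β := derIter_antitone _ hβδ hq0
    refine isoIn_eq_empty (b := e.symm ⊥) ⟨⊥, bot_mem_botSet _, rfl⟩ ?_ ?_ hchfin
    · rintro x ⟨q, hq, rfl⟩
      exact e.symm.monotone bot_le
    · refine ⟨e.symm ↑q0, ⟨↑q0, coe_mem_botSet.mpr hq0β, rfl⟩, fun hcon => ?_⟩
      exact WithBot.coe_ne_bot (e.symm.injective hcon)
  · refine ⟨e.symm ⊥, ?_⟩
    rw [derIter_succ, key δ le_rfl, derStep_image e.symm,
      derStep_bot_collapse hanti hinf, image_singleton]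

theorem master
    (V : Ordinal → Type) [inst : ∀ γ : Ordinal, PartialOrder (V γ)]
    (seq : Ordinal → ℕ → Ordinal)
    (hV0 : ∀ x y : V 0, x = y) (hV0ne : Nonempty (V 0))
    (hchainfin : ∀ γ : Ordinal, γ.card ≤ Cardinal.aleph0 → ∀ x : V γ, {y : V γ | y ≤ x}.Finite)
    (hseqmono : ∀ γ : Ordinal, γ.card ≤ Cardinal.aleph0 → Order.IsSuccLimit γ → StrictMono (seq γ))
    (hseqsucc : ∀ γ : Ordinal, γ.card ≤ Cardinal.aleph0 → Order.IsSuccLimit γ →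
      ∀ n : ℕ, ∃ δ : Ordinal, seq γ n = δ + 1)
    (hseqlt : ∀ γ : Ordinal, γ.card ≤ Cardinal.aleph0 → Order.IsSuccLimit γ → ∀ n : ℕ, seq γ n < γ)
    (hseqcof : ∀ γ : Ordinal, γ.card ≤ Cardinal.aleph0 → Order.IsSuccLimit γ →
      ∀ δ : Ordinal, δ < γ → ∃ n : ℕ, δ < seq γ n)
    (hsucc : ∀ γ : Ordinal, γ.card ≤ Cardinal.aleph0 → (γ = 0 ∨ ∃ δ : Ordinal, γ = δ + 1) →
      Nonempty (V (γ + 1) ≃o WithBot (Σ _ : ℕ, V γ)))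
    (hlimsucc : ∀ γ : Ordinal, γ.card ≤ Cardinal.aleph0 → Order.IsSuccLimit γ →
      Nonempty (V (γ + 1) ≃o WithBot (V γ)))
    (hlim : ∀ γ : Ordinal, γ.card ≤ Cardinal.aleph0 → Order.IsSuccLimit γ →
      Nonempty (V γ ≃o (Σ n : ℕ, V (seq γ n)))) :
    ∀ γ : Ordinal, γ.card ≤ Cardinal.aleph0 →
      ((∃ δ : Ordinal, γ = δ + 1) →
        (∀ β < γ, IsoIn (derIter (univ : Set (V γ)) β) = ∅) ∧
        (∃ r : V γ, derIter (univ : Set (V γ)) γ = {r})) ∧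
      (Order.IsSuccLimit γ →
        (∀ β < γ, (IsoIn (derIter (univ : Set (V γ)) β)).Finite) ∧
        ((derIter (univ : Set (V γ)) γ).Infinite ∧
          ∀ x ∈ derIter (univ : Set (V γ)) γ, ∀ y ∈ derIter (univ : Set (V γ)) γ, ¬ x < y)) := by
  intro γ
  induction γ using Ordinal.induction with
  | _ γ IH =>
    intro hγc
    rcases Ordinal.zero_or_succ_or_isSuccLimit γ with rfl | ⟨δ, rfl⟩ | hγlim
    · refine ⟨fun ⟨δ, h⟩ => ?_, fun hl => absurd hl Ordinal.not_isSuccLimit_zero⟩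
      rw [Ordinal.add_one_eq_succ] at h
      exact absurd h.symm (Ordinal.succ_ne_zero δ)
    · rw [← Ordinal.add_one_eq_succ] at *
      refine ⟨fun _ => ?_, fun hl => absurd hl
        (by rw [Ordinal.add_one_eq_succ]; exact Order.not_isSuccLimit_succ δ)⟩
      have hδc : δ.card ≤ Cardinal.aleph0 :=
        (Ordinal.card_le_card (le_self_add)).trans hγc
      have hchP : ∀ x : V (δ + 1), {y : V (δ + 1) | y ≤ x}.Finite := hchainfin (δ + 1) hγc
      have hδlt : δ < δ + 1 := by
        rw [Ordinal.add_one_eq_succ]; exact Order.lt_succ δ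
      rcases Ordinal.zero_or_succ_or_isSuccLimit δ with rfl | ⟨δ', hδ'⟩ | hδlim
      · -- δ = 0
        obtain ⟨e⟩ := hsucc 0 hδc (Or.inl rfl)
        haveI : Infinite (Σ _ : ℕ, V 0) :=
          Infinite.of_injective (fun n => (⟨n, hV0ne.some⟩ : Σ _ : ℕ, V 0))
            (fun a b h => congrArg Sigma.fst h)
        refine succStep e hchP (fun β hβ => absurd hβ (not_lt_zero (a := β))) ?_ ?_
        · rw [derIter_zero]; exact Set.infinite_univ
        · rw [derIter_zero]
          rintro ⟨n, a⟩ - ⟨m, b⟩ - hlt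
          have hnm : n = m := sig_fst_eq_of_le (le_of_lt hlt)
          subst hnm
          have hab : a = b := hV0 a b
          subst hab
          exact lt_irrefl _ (sig_mk_lt_mk.mp hlt)
      · -- δ successor
        obtain ⟨e⟩ := hsucc δ hδc (Or.inr ⟨δ', hδ'.symm⟩)
        obtain ⟨hIso, r, hr⟩ := (IH δ hδlt hδc).1
          ⟨δ', hδ'.symm⟩
        have kQ : ∀ β : Ordinal, derIter (univ : Set (Σ _ : ℕ, V δ)) β
            = sigSet (fun _ : ℕ => derIter (univ : Set (V δ)) β) := by
          intro β
          rw [← sigSet_univ, derIter_sig]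
        refine succStep e hchP ?_ ?_ ?_
        · intro β hβ
          rw [kQ β, isoIn_sig]
          have hempty : (sigSet fun n : ℕ => IsoIn (derIter (univ : Set (V δ)) β))
              = (∅ : Set (Σ _ : ℕ, V δ)) := by
            rw [hIso β hβ]
            exact eq_empty_iff_forall_notMem.mpr (fun x hx => hx)
          rw [hempty]
          exact finite_empty
        · rw [kQ δ, hr]
          exact Set.infinite_of_injective_forall_mem
            (f := fun n : ℕ => (⟨n, r⟩ : Σ _ : ℕ, V δ))
            (fun a b h => congrArg Sigma.fst h) (fun n => rfl)
        · rw [kQ δ, hr]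
          rintro ⟨n, a⟩ ha ⟨m, b⟩ hb hlt
          have hnm : n = m := sig_fst_eq_of_le (le_of_lt hlt)
          subst hnm
          have ha' : a = r := ha
          have hb' : b = r := hb
          subst ha'; subst hb'
          exact lt_irrefl _ (sig_mk_lt_mk.mp hlt)
      · -- δ limit
        obtain ⟨e⟩ := hlimsucc δ hδc hδlim
        obtain ⟨h1, h2, h3⟩ := (IH δ hδlt hδc).2 hδlim
        exact succStep e hchP h1 h2 h3
    · -- γ limit
      refine ⟨fun ⟨δ', hδ'⟩ => absurd hγlim
        (by rw [hδ', Ordinal.add_one_eq_succ]; exact Order.not_isSuccLimit_succ δ'), fun _ => ?_⟩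
      obtain ⟨e⟩ := hlim γ hγc hγlim
      have hsl : ∀ n : ℕ, seq γ n < γ := hseqlt γ hγc hγlim
      have hsc : ∀ n : ℕ, (seq γ n).card ≤ Cardinal.aleph0 :=
        fun n => (Ordinal.card_le_card (le_of_lt (hsl n))).trans hγc
      have IHn := fun n : ℕ => (IH (seq γ n) (hsl n) (hsc n)).1 (hseqsucc γ hγc hγlim n)
      choose r hrn using fun n : ℕ => (IHn n).2
      have hIson := fun n : ℕ => (IHn n).1
      have kform : ∀ β : Ordinal, derIter (univ : Set (V γ)) β
          = e.symm '' sigSet (fun n => derIter (univ : Set (V (seq γ n))) β) := by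
        intro β
        rw [derIter_univ_image e.symm, ← sigSet_univ, derIter_sig]
      constructor
      · intro β hβ
        rw [kform β, isoIn_image, isoIn_sig]
        obtain ⟨N, hN⟩ := hseqcof γ hγc hγlim β hβ
        refine Set.Finite.image _ (sigSet_finite (fun n => ?_) (N := N) (fun n hn => ?_))
        · rcases lt_or_ge β (seq γ n) with h | h
          · rw [hIson n β h]; exact finite_empty
          · have hsing := derIter_of_singleton (hrn n) β h
            exact Set.Finite.subset (finite_singleton (r n)) (hsing ▸ IsoIn_subset _)
        · have hlt2 : β < seq γ n := lt_of_lt_of_le hN ((hseqmono γ hγc hγlim).monotone hn)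
          exact hIson n β hlt2
      · have hrγ : ∀ n : ℕ, derIter (univ : Set (V (seq γ n))) γ = {r n} :=
          fun n => derIter_of_singleton (hrn n) γ (le_of_lt (hsl n))
        have kq : derIter (univ : Set (V γ)) γ
            = e.symm '' sigSet (fun n => ({r n} : Set (V (seq γ n)))) := by
          have hfe : (fun n => derIter (univ : Set (V (seq γ n))) γ)
              = fun n => ({r n} : Set (V (seq γ n))) := funext hrγ
          rw [kform γ, hfe]
        constructor
        · rw [kq]
          exact Set.infinite_of_injective_forall_mem
            (f := fun n : ℕ => e.symm ⟨n, r n⟩)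
            (fun a b h => congrArg Sigma.fst (e.symm.injective h))
            (fun n => ⟨⟨n, r n⟩, rfl, rfl⟩)
        · rw [kq]
          rintro x ⟨a, ha, rfl⟩ y ⟨b, hb, rfl⟩ hlt
          have hab : a < b := by rwa [e.symm.lt_iff_lt] at hlt
          obtain ⟨n, a2⟩ := a; obtain ⟨m, b2⟩ := b
          have hnm : n = m := sig_fst_eq_of_le (le_of_lt hab)
          subst hnm
          have ha' : a2 = r n := ha
          have hb' : b2 = r n := hb
          subst ha'; subst hb'
          exact lt_irrefl _ (sig_mk_lt_mk.mp hab)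


def imageIso {P Q : Type*} [PartialOrder P] [PartialOrder Q] (f : P ≃o Q) (A : Set P) :
    ↥(f '' A) ≃o ↥A where
  toFun y := ⟨f.symm y, by
    obtain ⟨a, ha, hae⟩ := y.2
    rwa [← hae, f.symm_apply_apply]⟩
  invFun x := ⟨f x, mem_image_of_mem f x.2⟩
  left_inv y := Subtype.ext (f.apply_symm_apply y)
  right_inv x := Subtype.ext (f.symm_apply_apply x)
  map_rel_iff' := by
    intro a b
    simp only [Equiv.coe_fn_mk, Subtype.mk_le_mk]
    exact f.symm.le_iff_le

def sigSubtypeIso {Pn : ℕ → Type*} [∀ n, PartialOrder (Pn n)] (S : ∀ n, Set (Pn n)) :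
    ↥(sigSet S) ≃o Σ n, ↥(S n) where
  toFun x := ⟨x.1.1, ⟨x.1.2, x.2⟩⟩
  invFun s := ⟨⟨s.1, s.2.1⟩, s.2.2⟩
  left_inv x := rfl
  right_inv s := rfl
  map_rel_iff' := by
    rintro ⟨⟨n, a2⟩, ha⟩ ⟨⟨m, b2⟩, hb⟩
    simp only [Equiv.coe_fn_mk]
    constructor
    · intro h
      have hnm : n = m := sig_fst_eq_of_le h
      subst hnm
      have h2 : (⟨a2, ha⟩ : ↥(S n)) ≤ ⟨b2, hb⟩ :=
        (@Sigma.mk_le_mk_iff ℕ (fun k => ↥(S k)) _ n ⟨a2, ha⟩ ⟨b2, hb⟩).mp h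
      have h3 : a2 ≤ b2 := h2
      exact Subtype.mk_le_mk.mpr ((@Sigma.mk_le_mk_iff ℕ Pn _ n a2 b2).mpr h3)
    · intro h
      have h' : (⟨n, a2⟩ : Σ n, Pn n) ≤ ⟨m, b2⟩ := h
      have hnm : n = m := sig_fst_eq_of_le h'
      subst hnm
      have h3 : a2 ≤ b2 := (@Sigma.mk_le_mk_iff ℕ Pn _ n a2 b2).mp h'
      have h4 : (⟨a2, ha⟩ : ↥(S n)) ≤ ⟨b2, hb⟩ := h3
      exact (@Sigma.mk_le_mk_iff ℕ (fun k => ↥(S k)) _ n ⟨a2, ha⟩ ⟨b2, hb⟩).mpr h4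

def eqOrderIso {A B : Type*} [PartialOrder A] [PartialOrder B]
    (hA : ∀ a b : A, a ≤ b ↔ a = b) (hB : ∀ a b : B, a ≤ b ↔ a = b) (f : A ≃ B) : A ≃o B :=
  { toEquiv := f,
    map_rel_iff' := by
      intro a b
      rw [hB, hA]
      exact ⟨fun h => f.injective h, fun h => congrArg f h⟩ }

theorem countable_V
    (V : Ordinal → Type) [inst : ∀ γ : Ordinal, PartialOrder (V γ)]
    (seq : Ordinal → ℕ → Ordinal)
    (hV0 : ∀ x y : V 0, x = y) (hV0ne : Nonempty (V 0))
    (hseqlt : ∀ γ : Ordinal, γ.card ≤ Cardinal.aleph0 → Order.IsSuccLimit γ → ∀ n : ℕ, seq γ n < γ)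
    (hsucc : ∀ γ : Ordinal, γ.card ≤ Cardinal.aleph0 → (γ = 0 ∨ ∃ δ : Ordinal, γ = δ + 1) →
      Nonempty (V (γ + 1) ≃o WithBot (Σ _ : ℕ, V γ)))
    (hlimsucc : ∀ γ : Ordinal, γ.card ≤ Cardinal.aleph0 → Order.IsSuccLimit γ →
      Nonempty (V (γ + 1) ≃o WithBot (V γ)))
    (hlim : ∀ γ : Ordinal, γ.card ≤ Cardinal.aleph0 → Order.IsSuccLimit γ →
      Nonempty (V γ ≃o (Σ n : ℕ, V (seq γ n)))) :
    ∀ γ : Ordinal, γ.card ≤ Cardinal.aleph0 → Countable (V γ) := by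
  intro γ
  induction γ using Ordinal.induction with
  | _ γ IH =>
    intro hγc
    rcases Ordinal.zero_or_succ_or_isSuccLimit γ with rfl | ⟨δ, rfl⟩ | hγlim
    · haveI : Subsingleton (V 0) := ⟨hV0⟩
      exact Subsingleton.to_countable
    · rw [← Ordinal.add_one_eq_succ] at *
      have hδlt : δ < δ + 1 := by rw [Ordinal.add_one_eq_succ]; exact Order.lt_succ δ
      have hδc : δ.card ≤ Cardinal.aleph0 :=
        (Ordinal.card_le_card (le_self_add)).trans hγc
      haveI := IH δ hδlt hδc
      rcases Ordinal.zero_or_succ_or_isSuccLimit δ with rfl | ⟨δ', hδ'⟩ | hδlim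
      · obtain ⟨e⟩ := hsucc 0 hδc (Or.inl rfl)
        exact Countable.of_equiv _ e.symm.toEquiv
      · obtain ⟨e⟩ := hsucc δ hδc (Or.inr ⟨δ', hδ'.symm⟩)
        exact Countable.of_equiv _ e.symm.toEquiv
      · obtain ⟨e⟩ := hlimsucc δ hδc hδlim
        exact Countable.of_equiv _ e.symm.toEquiv
    · obtain ⟨e⟩ := hlim γ hγc hγlim
      haveI : ∀ n : ℕ, Countable (V (seq γ n)) := fun n =>
        IH (seq γ n) (hseqlt γ hγc hγlim n)
          ((Ordinal.card_le_card (le_of_lt (hseqlt γ hγc hγlim n))).trans hγc)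
      exact Countable.of_equiv _ e.symm.toEquiv


end Aux

theorem statement6
    (V : Ordinal → Type) [∀ γ : Ordinal, PartialOrder (V γ)]
    (seq : Ordinal → ℕ → Ordinal)
    (hV0 : ∀ x y : V 0, x = y) (hV0ne : Nonempty (V 0))
    (hchainfin : ∀ γ : Ordinal, γ.card ≤ Cardinal.aleph0 → ∀ x : V γ, {y : V γ | y ≤ x}.Finite)
    (hchainlin : ∀ γ : Ordinal, γ.card ≤ Cardinal.aleph0 →
      ∀ x y w : V γ, y ≤ x → w ≤ x → y ≤ w ∨ w ≤ y)
    (hseqmono : ∀ γ : Ordinal, γ.card ≤ Cardinal.aleph0 → Order.IsSuccLimit γ → StrictMono (seq γ))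
    (hseqsucc : ∀ γ : Ordinal, γ.card ≤ Cardinal.aleph0 → Order.IsSuccLimit γ →
      ∀ n : ℕ, ∃ δ : Ordinal, seq γ n = δ + 1)
    (hseqlt : ∀ γ : Ordinal, γ.card ≤ Cardinal.aleph0 → Order.IsSuccLimit γ → ∀ n : ℕ, seq γ n < γ)
    (hseqcof : ∀ γ : Ordinal, γ.card ≤ Cardinal.aleph0 → Order.IsSuccLimit γ →
      ∀ δ : Ordinal, δ < γ → ∃ n : ℕ, δ < seq γ n)
    (hsucc : ∀ γ : Ordinal, γ.card ≤ Cardinal.aleph0 → (γ = 0 ∨ ∃ δ : Ordinal, γ = δ + 1) →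
      Nonempty (V (γ + 1) ≃o WithBot (Σ _ : ℕ, V γ)))
    (hlimsucc : ∀ γ : Ordinal, γ.card ≤ Cardinal.aleph0 → Order.IsSuccLimit γ →
      Nonempty (V (γ + 1) ≃o WithBot (V γ)))
    (hlim : ∀ γ : Ordinal, γ.card ≤ Cardinal.aleph0 → Order.IsSuccLimit γ →
      Nonempty (V γ ≃o (Σ n : ℕ, V (seq γ n))))
    (α : Ordinal) (hαc : α.card ≤ Cardinal.aleph0) (hαlim : Order.IsSuccLimit α) :
    (∀ β : Ordinal, β < α →
      Nonempty (↥(derIter (Set.univ : Set (V α)) β)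
        ≃o (Σ n : ℕ, ↥(derIter (Set.univ : Set (V (seq α n))) β))) ∧
      ∀ n : ℕ, seq α n ≤ β → ∃! x : V (seq α n), x ∈ derIter (Set.univ : Set (V (seq α n))) β) ∧
    Nonempty (↥(derIter (Set.univ : Set (V α)) α) ≃o (Σ _ : ℕ, V 0)) := by
  obtain ⟨e⟩ := hlim α hαc hαlim
  have hsl : ∀ n : ℕ, seq α n < α := hseqlt α hαc hαlim
  have hsc : ∀ n : ℕ, (seq α n).card ≤ Cardinal.aleph0 :=
    fun n => (Ordinal.card_le_card (le_of_lt (hsl n))).trans hαc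
  have M := master V seq hV0 hV0ne hchainfin hseqmono hseqsucc hseqlt hseqcof
    hsucc hlimsucc hlim
  have IHn := fun n : ℕ => (M (seq α n) (hsc n)).1 (hseqsucc α hαc hαlim n)
  choose r hrn using fun n : ℕ => (IHn n).2
  have kform : ∀ β : Ordinal, derIter (univ : Set (V α)) β
      = e.symm '' sigSet (fun n => derIter (univ : Set (V (seq α n))) β) := fun β => by
    rw [derIter_univ_image e.symm, ← sigSet_univ, derIter_sig]
  constructor
  · intro β hβ
    constructor
    · exact ⟨((OrderIso.setCongr _ _ (kform β)).trans
        (imageIso e.symm (sigSet fun n => derIter (univ : Set (V (seq α n))) β))).trans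
        (sigSubtypeIso _)⟩
    · intro n hn
      have hs := derIter_of_singleton (hrn n) β hn
      refine ⟨r n, ?_, ?_⟩
      · rw [hs]; rfl
      · intro y hy
        rw [hs] at hy
        exact hy
  · obtain ⟨hfinIso, hinfin, hanti⟩ := (M α hαc).2 hαlim
    haveI hcV : Countable (V α) := countable_V V seq hV0 hV0ne hseqlt hsucc hlimsucc hlim α hαc
    haveI : Subsingleton (V 0) := ⟨hV0⟩
    haveI hI1 : Infinite (↥(derIter (univ : Set (V α)) α)) := hinfin.to_subtype
    haveI hI2 : Infinite (Σ _ : ℕ, V 0) :=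
      Infinite.of_injective (fun n => (⟨n, hV0ne.some⟩ : Σ _ : ℕ, V 0))
        (fun a b h => congrArg Sigma.fst h)
    obtain ⟨d1⟩ := nonempty_denumerable_iff.mpr
      (⟨inferInstance, inferInstance⟩ : Countable (↥(derIter (univ : Set (V α)) α))
        ∧ Infinite (↥(derIter (univ : Set (V α)) α)))
    obtain ⟨d2⟩ := nonempty_denumerable_iff.mpr
      (⟨inferInstance, inferInstance⟩ : Countable (Σ _ : ℕ, V 0) ∧ Infinite (Σ _ : ℕ, V 0))
    refine ⟨eqOrderIso ?_ ?_ ((@Denumerable.eqv _ d1).trans (@Denumerable.eqv _ d2).symm)⟩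
    · intro a b
      constructor
      · intro hle
        apply Subtype.ext
        by_contra hne
        exact hanti a.1 a.2 b.1 b.2 (lt_of_le_of_ne hle hne)
      · rintro rfl; exact le_rfl
    · rintro ⟨n, x⟩ ⟨m, y⟩
      constructor
      · intro hle
        have hnm : n = m := sig_fst_eq_of_le hle
        subst hnm
        rw [hV0 x y]
      · intro h; exact le_of_eq h


end Paper
end
end
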